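/- Let f_n = Σ_{k=0}^{⌊n/2⌋} (−1)^k q^{k²} [n−k choose k]_q and let F(x) = Σ_{n=0}^{∞} f_n x^n be its generating function in the ring of formal power series in x over ℤ[q]. Then F(x)·(1−x) = 1 − qx²·F(qx), and consequently F(x) = Σ_{k=0}^{∞} (−1)^k q^{k²} x^{2k} · (x;q)_{k+1}^{−1}, where each (x;q)_{k+1} = (1−x)(1−qx)⋯(1−q^k x) is invertible as a formal power series. -/

import Mathlib

/-- The Gaussian (q-)binomial coefficient `[n choose k]_q ∈ ℤ[q]`, defined through the
q-Pascal recurrence `[n+1 choose k+1] = [n choose k] + q^{k+1} [n choose k+1]`. -/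
noncomputable def qBinom : ℕ → ℕ → Polynomial ℤ
  | _, 0 => 1
  | 0, _ + 1 => 0
  | n + 1, k + 1 => qBinom n k + Polynomial.X ^ (k + 1) * qBinom n (k + 1)

/-- `f_n = ∑_{k=0}^{⌊n/2⌋} (-1)^k q^{k²} [n-k choose k]_q ∈ ℤ[q]`. -/
noncomputable def fPoly (n : ℕ) : Polynomial ℤ :=
  ∑ k ∈ Finset.range (n / 2 + 1),
    (-1) ^ k * Polynomial.X ^ (k ^ 2) * qBinom (n - k) k

/-- The generating function `F(x) = ∑_{n=0}^∞ f_n x^n ∈ ℤ[q][[x]]`. -/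
noncomputable def Fgen : PowerSeries (Polynomial ℤ) :=
  PowerSeries.mk fun n => fPoly n

/-- The parameter `q`, viewed as a constant of the power series ring `ℤ[q][[x]]`. -/
noncomputable def qc : PowerSeries (Polynomial ℤ) :=
  PowerSeries.C (R := Polynomial ℤ) Polynomial.X

/-- The q-Pochhammer symbol `(x;q)_{k+1} = (1-x)(1-qx)⋯(1-q^k x)` in `ℤ[q][[x]]`. -/
noncomputable def qPoch (m : ℕ) : PowerSeries (Polynomial ℤ) :=
  ∏ i ∈ Finset.range m, (1 - qc ^ i * PowerSeries.X)

/-- The sum `∑_{k=0}^∞ f k` of a family of power series whose `k`-th member is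
divisible by `x^k` (here, even by `x^{2k}`). -/
noncomputable def seriesSum (f : ℕ → PowerSeries (Polynomial ℤ)) :
    PowerSeries (Polynomial ℤ) :=
  PowerSeries.mk fun d => PowerSeries.coeff (R := Polynomial ℤ) d (∑ k ∈ Finset.range (d + 1), f k)


open Polynomial

lemma qBinom_zero (n : ℕ) : qBinom n 0 = 1 := by cases n <;> rfl

lemma qBinom_succ (n k : ℕ) :
    qBinom (n+1) (k+1) = qBinom n k + X ^ (k + 1) * qBinom n (k + 1) := rfl

lemma qBinom_eq_zero : ∀ {n k : ℕ}, n < k → qBinom n k = 0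
  | _, 0, h => absurd h (Nat.not_lt_zero _)
  | 0, _ + 1, _ => rfl
  | n + 1, k + 1, h => by
    rw [qBinom_succ, qBinom_eq_zero (by omega), qBinom_eq_zero (by omega), mul_zero, add_zero]

lemma qBinom_one : ∀ n : ℕ, qBinom (n+1) 1 = X ^ n + qBinom n 1
  | 0 => by simp [qBinom_succ, qBinom_zero, qBinom_eq_zero]
  | n + 1 => by
    have e1 : qBinom (n+1) 1 = 1 + X * qBinom n 1 := by
      rw [qBinom_succ n 0, qBinom_zero]; ring
    have e2 := qBinom_one n
    rw [qBinom_succ (n+1) 0, qBinom_zero]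
    simp only [zero_add, pow_one]
    linear_combination (X : Polynomial ℤ) * e2 - e1

lemma qBinom_pascal2 (n : ℕ) : ∀ k,
    qBinom (n+1) (k+1) = X ^ (n - k) * qBinom n k + qBinom n (k+1) := by
  induction n with
  | zero =>
    intro k
    cases k with
    | zero => simp [qBinom_succ, qBinom_zero, qBinom_eq_zero]
    | succ k => simp [qBinom_succ, qBinom_eq_zero]
  | succ n IH =>
    intro k
    cases k with
    | zero => simpa [qBinom_zero] using qBinom_one (n+1)
    | succ k =>
      rcases lt_trichotomy k n with h | h | h
      · have A := IH (k+1)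
        have B := IH k
        have e1 : qBinom n k + X ^ (k + 1) * qBinom n (k + 1)
            = X ^ (n - k) * qBinom n k + qBinom n (k+1) := (qBinom_succ n k).symm.trans B
        have e2 : qBinom n (k+1) + X ^ (k + 2) * qBinom n (k + 2)
            = X ^ (n - (k+1)) * qBinom n (k+1) + qBinom n (k+2) :=
          (qBinom_succ n (k+1)).symm.trans A
        have hX : (X : Polynomial ℤ) ^ (n - k) = X * X ^ (n - (k+1)) := by
          rw [show n - k = (n - (k+1)) + 1 by omega, pow_succ']
        rw [Nat.succ_sub_succ, qBinom_succ (n+1) (k+1), qBinom_succ n k, qBinom_succ n (k+1)]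
        linear_combination e1 + (X : Polynomial ℤ) ^ (k+2) * e2
          - ((X : Polynomial ℤ) ^ (k+1) * qBinom n (k+1)) * hX
      · subst h
        have z1 : qBinom (k+1) (k+2) = 0 := qBinom_eq_zero (by omega)
        rw [qBinom_succ (k+1) (k+1), z1, mul_zero, add_zero, add_zero, Nat.succ_sub_succ,
          Nat.sub_self, pow_zero, one_mul]
      · rw [qBinom_eq_zero (by omega), qBinom_eq_zero (by omega), qBinom_eq_zero (by omega),
          mul_zero, add_zero]

lemma fPoly_eq_sum (m N : ℕ) (h : m / 2 + 1 ≤ N) :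
    fPoly m = ∑ k ∈ Finset.range N, (-1) ^ k * X ^ (k ^ 2) * qBinom (m - k) k := by
  rw [fPoly]
  apply Finset.sum_subset (Finset.range_subset_range.2 h)
  intro k hk hk2
  rw [Finset.mem_range] at hk hk2
  rw [qBinom_eq_zero (show m - k < k by omega), mul_zero]

lemma fPoly_zero : fPoly 0 = 1 := by simp [fPoly, qBinom_zero]

lemma fPoly_one : fPoly 1 = 1 := by simp [fPoly, qBinom_zero]

lemma fPoly_rec (n : ℕ) : fPoly (n+2) = fPoly (n+1) - X ^ (n+1) * fPoly n := by
  rw [fPoly_eq_sum (n+2) (n/2 + 2) (by omega), fPoly_eq_sum (n+1) (n/2 + 2) (by omega),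
    fPoly_eq_sum n (n/2 + 2) (by omega)]
  have hL : ∑ k ∈ Finset.range (n/2 + 1 + 1), (-1) ^ k * X ^ (k ^ 2) * qBinom (n + 2 - k) k
      = (∑ i ∈ Finset.range (n/2 + 1), (-1) ^ (i+1) * X ^ ((i+1) ^ 2) * qBinom (n + 2 - (i+1)) (i+1)) + 1 := by
    rw [Finset.sum_range_succ' _ (n/2 + 1)]
    simp [qBinom_zero]
  have hR1 : ∑ k ∈ Finset.range (n/2 + 1 + 1), (-1) ^ k * X ^ (k ^ 2) * qBinom (n + 1 - k) k
      = (∑ i ∈ Finset.range (n/2 + 1), (-1) ^ (i+1) * X ^ ((i+1) ^ 2) * qBinom (n + 1 - (i+1)) (i+1)) + 1 := by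
    rw [Finset.sum_range_succ' _ (n/2 + 1)]
    simp [qBinom_zero]
  have hR0 : ∑ k ∈ Finset.range (n/2 + 1 + 1), (-1) ^ k * X ^ (k ^ 2) * qBinom (n - k) k
      = ∑ i ∈ Finset.range (n/2 + 1), (-1) ^ i * X ^ (i ^ 2) * qBinom (n - i) i := by
    rw [Finset.sum_range_succ]
    rw [qBinom_eq_zero (show n - (n/2+1) < n/2 + 1 by omega), mul_zero, add_zero]
  have hsz : n/2 + 1 + 1 = n/2 + 2 := rfl
  rw [← hsz, hL, hR1, hR0, Finset.mul_sum]
  have key : ∀ i ∈ Finset.range (n/2 + 1),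
      (-1) ^ (i+1) * X ^ ((i+1) ^ 2) * qBinom (n + 2 - (i+1)) (i+1)
      = (-1) ^ (i+1) * X ^ ((i+1) ^ 2) * qBinom (n + 1 - (i+1)) (i+1)
        - X ^ (n+1) * ((-1) ^ i * X ^ (i ^ 2) * qBinom (n - i) i) := by
    intro i hi
    rw [Finset.mem_range] at hi
    have h2i : 2 * i ≤ n := by omega
    have e1 : n + 2 - (i+1) = (n - i) + 1 := by omega
    have e2 : n + 1 - (i+1) = n - i := by omega
    have e3 : n - i - i = n - 2 * i := by omega
    have hexp : (i+1) ^ 2 + (n - 2 * i) = (n + 1) + i ^ 2 := by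
      obtain ⟨m, hm⟩ := Nat.le.dest h2i
      rw [← hm, Nat.add_sub_cancel_left]
      ring
    have hpow : (X : Polynomial ℤ) ^ ((i+1) ^ 2) * X ^ (n - 2 * i)
        = X ^ (n+1) * X ^ (i ^ 2) := by
      rw [← pow_add, ← pow_add, hexp]
    rw [e1, e2, qBinom_pascal2 (n - i) i, e3]
    linear_combination ((-1 : Polynomial ℤ) ^ (i+1) * qBinom (n-i) i) * hpow
  rw [Finset.sum_congr rfl key, Finset.sum_sub_distrib]
  ring

namespace QHelp

local notation "R" => Polynomial ℤ
local notation "cf" => @PowerSeries.coeff (Polynomial ℤ) _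

lemma coeff_seriesSum (f : ℕ → PowerSeries R) (hf : ∀ k d : ℕ, d < k → cf d (f k) = 0)
    (d N : ℕ) (h : d ≤ N) :
    cf d (seriesSum f) = cf d (∑ k ∈ Finset.range (N + 1), f k) := by
  rw [seriesSum, PowerSeries.coeff_mk, map_sum, map_sum]
  apply Finset.sum_subset (Finset.range_subset_range.2 (by omega))
  intro k hk hk2
  rw [Finset.mem_range] at hk hk2
  exact hf k d (by omega)

lemma seriesSum_mul (f : ℕ → PowerSeries R) (g : PowerSeries R)
    (hf : ∀ k d : ℕ, d < k → cf d (f k) = 0) :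
    seriesSum f * g = seriesSum fun k => f k * g := by
  apply PowerSeries.ext
  intro d
  have h1 : cf d (seriesSum fun k => f k * g)
      = cf d ((∑ k ∈ Finset.range (d + 1), f k) * g) := by
    rw [seriesSum, PowerSeries.coeff_mk, Finset.sum_mul]
  rw [h1, PowerSeries.coeff_mul, PowerSeries.coeff_mul]
  apply Finset.sum_congr rfl
  intro p hp
  rw [Finset.HasAntidiagonal.mem_antidiagonal] at hp
  rw [coeff_seriesSum f hf p.1 d (by omega)]

lemma seriesSum_mul_left (g : PowerSeries R) (f : ℕ → PowerSeries R)
    (hf : ∀ k d : ℕ, d < k → cf d (f k) = 0) :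
    g * seriesSum f = seriesSum fun k => g * f k := by
  rw [mul_comm, seriesSum_mul f g hf]
  have : (fun k => f k * g) = fun k => g * f k := funext fun k => mul_comm _ _
  rw [this]

lemma seriesSum_rescale (a : R) (f : ℕ → PowerSeries R)
    (hf : ∀ k d : ℕ, d < k → cf d (f k) = 0) :
    PowerSeries.rescale a (seriesSum f) = seriesSum fun k => PowerSeries.rescale a (f k) := by
  apply PowerSeries.ext
  intro d
  rw [PowerSeries.coeff_rescale, seriesSum, seriesSum, PowerSeries.coeff_mk,
    PowerSeries.coeff_mk, map_sum, map_sum, Finset.mul_sum]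
  apply Finset.sum_congr rfl
  intro k _
  rw [PowerSeries.coeff_rescale]

lemma seriesSum_cons (c : PowerSeries R) (h : ℕ → PowerSeries R)
    (hh : ∀ d : ℕ, cf d (h d) = 0) :
    seriesSum (fun k => Nat.rec c (fun n _ => h n) k) = c + seriesSum h := by
  apply PowerSeries.ext
  intro d
  rw [map_add, seriesSum, seriesSum, PowerSeries.coeff_mk, PowerSeries.coeff_mk,
    Finset.sum_range_succ' _ d, Finset.sum_range_succ _ d, map_add, map_add, hh d,
    add_zero]
  exact add_comm _ _

lemma isUnit_qPoch (m : ℕ) : IsUnit (qPoch m) := by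
  rw [PowerSeries.isUnit_iff_constantCoeff]
  have : PowerSeries.constantCoeff (qPoch m) = 1 := by
    rw [qPoch, map_prod]
    apply Finset.prod_eq_one
    intro i _
    simp [qc]
  rw [this]
  exact isUnit_one

lemma inverse_eq_of (a b : PowerSeries R) (hab : a * b = 1) : Ring.inverse a = b := by
  have ha : IsUnit a := IsUnit.of_mul_eq_one b hab
  calc Ring.inverse a = Ring.inverse a * (a * b) := by rw [hab, mul_one]
  _ = (Ring.inverse a * a) * b := by ring
  _ = b := by rw [Ring.inverse_mul_cancel a ha, one_mul]

lemma rescale_C (a b : R) : PowerSeries.rescale a (PowerSeries.C b) = PowerSeries.C b := by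
  apply PowerSeries.ext
  intro d
  rw [PowerSeries.coeff_rescale, PowerSeries.coeff_C]
  split_ifs with h
  · subst h; simp
  · simp

lemma rescale_qc : PowerSeries.rescale Polynomial.X qc = qc := rescale_C _ _

lemma rescale_X' : PowerSeries.rescale Polynomial.X (PowerSeries.X : PowerSeries R)
    = qc * PowerSeries.X := by
  rw [PowerSeries.rescale_X]; rfl

lemma qPoch_succ (m : ℕ) :
    qPoch (m + 1) = (1 - PowerSeries.X) * PowerSeries.rescale Polynomial.X (qPoch m) := by
  rw [qPoch, qPoch, Finset.prod_range_succ', map_prod]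
  have h1 : ∀ i, PowerSeries.rescale Polynomial.X (1 - qc ^ i * PowerSeries.X)
      = 1 - qc ^ (i + 1) * PowerSeries.X := by
    intro i
    rw [map_sub, map_one, map_mul, map_pow, rescale_qc, rescale_X']
    ring
  rw [Finset.prod_congr rfl fun i _ => h1 i]
  simp [mul_comm]

lemma Fgen_eq : Fgen * (1 - PowerSeries.X)
    = 1 - qc * PowerSeries.X ^ 2 * PowerSeries.rescale Polynomial.X Fgen := by
  rw [mul_one_sub, show qc * PowerSeries.X ^ 2 * PowerSeries.rescale Polynomial.X Fgen
    = (qc * PowerSeries.rescale Polynomial.X Fgen) * PowerSeries.X ^ 2 from by ring]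
  apply PowerSeries.ext
  intro d
  rw [map_sub, map_sub]
  match d with
  | 0 =>
    rw [PowerSeries.coeff_zero_mul_X, PowerSeries.coeff_mul_X_pow', PowerSeries.coeff_one]
    norm_num [Fgen, PowerSeries.coeff_mk, fPoly_zero]
  | 1 =>
    rw [PowerSeries.coeff_succ_mul_X, PowerSeries.coeff_mul_X_pow', PowerSeries.coeff_one]
    norm_num [Fgen, PowerSeries.coeff_mk, fPoly_zero, fPoly_one]
  | (n+2) =>
    rw [PowerSeries.coeff_succ_mul_X, PowerSeries.coeff_mul_X_pow, PowerSeries.coeff_one, qc,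
      PowerSeries.coeff_C_mul, PowerSeries.coeff_rescale]
    simp only [Fgen, PowerSeries.coeff_mk, Nat.succ_ne_zero, if_false]
    have := fPoly_rec n
    linear_combination this

lemma eqn_coeffs {F : PowerSeries R}
    (hF : F * (1 - PowerSeries.X)
      = 1 - qc * PowerSeries.X ^ 2 * PowerSeries.rescale Polynomial.X F) :
    cf 0 F = 1 ∧ cf 1 F = 1 ∧
      ∀ n, cf (n+2) F = cf (n+1) F - Polynomial.X ^ (n+1) * cf n F := by
  rw [mul_one_sub, show qc * PowerSeries.X ^ 2 * PowerSeries.rescale Polynomial.X F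
    = (qc * PowerSeries.rescale Polynomial.X F) * PowerSeries.X ^ 2 from by ring] at hF
  have h := fun d => congrArg (cf d) hF
  simp only [map_sub] at h
  have h0 := h 0
  rw [PowerSeries.coeff_zero_mul_X, PowerSeries.coeff_mul_X_pow', PowerSeries.coeff_one] at h0
  norm_num at h0
  have h1 := h 1
  rw [PowerSeries.coeff_succ_mul_X, PowerSeries.coeff_mul_X_pow', PowerSeries.coeff_one] at h1
  norm_num at h1
  have h0' : cf 0 F = 1 := by rw [PowerSeries.coeff_zero_eq_constantCoeff]; exact h0
  have h1' : cf 1 F = 1 := by linear_combination h1 + h0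
  refine ⟨h0', h1', fun n => ?_⟩
  have h2 := h (n+2)
  rw [PowerSeries.coeff_succ_mul_X, PowerSeries.coeff_mul_X_pow, PowerSeries.coeff_one, qc,
    PowerSeries.coeff_C_mul, PowerSeries.coeff_rescale] at h2
  simp only [Nat.succ_ne_zero, if_false] at h2
  linear_combination h2

lemma uniq {F G : PowerSeries R}
    (hF : F * (1 - PowerSeries.X)
      = 1 - qc * PowerSeries.X ^ 2 * PowerSeries.rescale Polynomial.X F)
    (hG : G * (1 - PowerSeries.X)
      = 1 - qc * PowerSeries.X ^ 2 * PowerSeries.rescale Polynomial.X G) :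
    F = G := by
  obtain ⟨hF0, hF1, hF2⟩ := eqn_coeffs hF
  obtain ⟨hG0, hG1, hG2⟩ := eqn_coeffs hG
  apply PowerSeries.ext
  intro d
  induction d using Nat.strong_induction_on with
  | _ d ih =>
    match d with
    | 0 => rw [hF0, hG0]
    | 1 => rw [hF1, hG1]
    | (n+2) => rw [hF2 n, hG2 n, ih (n+1) (by omega), ih n (by omega)]

noncomputable def T (k : ℕ) : PowerSeries R :=
  (-1) ^ k * qc ^ (k ^ 2) * PowerSeries.X ^ (2 * k) * Ring.inverse (qPoch (k + 1))

lemma hT : ∀ k d : ℕ, d < k → cf d (T k) = 0 := by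
  intro k d hdk
  have hdvd : (PowerSeries.X : PowerSeries R) ^ (2 * k) ∣ T k :=
    ⟨(-1) ^ k * qc ^ (k ^ 2) * Ring.inverse (qPoch (k + 1)), by rw [T]; ring⟩
  exact PowerSeries.X_pow_dvd_iff.mp hdvd d (by omega)

lemma rescale_inverse (m : ℕ) :
    PowerSeries.rescale Polynomial.X (Ring.inverse (qPoch m))
      = Ring.inverse (PowerSeries.rescale Polynomial.X (qPoch m)) :=
  (inverse_eq_of _ _ (by
    rw [← map_mul, Ring.mul_inverse_cancel _ (isUnit_qPoch m), map_one])).symm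

lemma hT0 : T 0 * (1 - PowerSeries.X) = 1 := by
  have h1 : qPoch 1 = 1 - PowerSeries.X := by rw [qPoch]; simp
  have h2 : T 0 = Ring.inverse (qPoch 1) := by rw [T]; norm_num
  rw [h2, ← h1, Ring.inverse_mul_cancel _ (isUnit_qPoch 1)]

lemma hTsucc (k : ℕ) : T (k+1) * (1 - PowerSeries.X)
    = -(qc * PowerSeries.X ^ 2) * PowerSeries.rescale Polynomial.X (T k) := by
  have hsplit := qPoch_succ (k+1)
  have hinv : Ring.inverse (qPoch (k+2)) * (1 - PowerSeries.X)
      = Ring.inverse (PowerSeries.rescale Polynomial.X (qPoch (k+1))) := by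
    refine (inverse_eq_of _ _ ?_).symm
    calc PowerSeries.rescale Polynomial.X (qPoch (k+1))
        * (Ring.inverse (qPoch (k+2)) * (1 - PowerSeries.X))
        = Ring.inverse (qPoch (k+2))
          * ((1 - PowerSeries.X) * PowerSeries.rescale Polynomial.X (qPoch (k+1))) := by ring
      _ = Ring.inverse (qPoch (k+2)) * qPoch (k+2) := by rw [← hsplit]
      _ = 1 := Ring.inverse_mul_cancel _ (isUnit_qPoch _)
  have hres : PowerSeries.rescale Polynomial.X (T k)
      = (-1) ^ k * qc ^ (k ^ 2) * (qc * PowerSeries.X) ^ (2 * k)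
        * Ring.inverse (PowerSeries.rescale Polynomial.X (qPoch (k+1))) := by
    rw [T, map_mul, map_mul, map_mul, map_pow, map_pow, map_pow, rescale_qc, rescale_X',
      rescale_inverse, map_neg, map_one]
  have e1 : (k+1) ^ 2 = k ^ 2 + 2 * k + 1 := by ring
  have e2 : 2 * (k+1) = 2 * k + 2 := by ring
  calc T (k+1) * (1 - PowerSeries.X)
      = (-1) ^ (k+1) * qc ^ ((k+1) ^ 2) * PowerSeries.X ^ (2 * (k+1))
        * (Ring.inverse (qPoch (k+2)) * (1 - PowerSeries.X)) := by rw [T]; ring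
    _ = (-1) ^ (k+1) * qc ^ ((k+1) ^ 2) * PowerSeries.X ^ (2 * (k+1))
        * Ring.inverse (PowerSeries.rescale Polynomial.X (qPoch (k+1))) := by rw [hinv]
    _ = -(qc * PowerSeries.X ^ 2) * PowerSeries.rescale Polynomial.X (T k) := by
        rw [hres, e1, e2]; ring

lemma S_eq : seriesSum T * (1 - PowerSeries.X)
    = 1 - qc * PowerSeries.X ^ 2 * PowerSeries.rescale Polynomial.X (seriesSum T) := by
  have hT' : ∀ k d : ℕ, d < k → cf d (PowerSeries.rescale Polynomial.X (T k)) = 0 := by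
    intro k d h
    rw [PowerSeries.coeff_rescale, hT k d h, mul_zero]
  have hfun : (fun k => T k * (1 - PowerSeries.X))
      = fun k => Nat.rec (motive := fun _ => PowerSeries R) 1
          (fun m _ => -(qc * PowerSeries.X ^ 2) * PowerSeries.rescale Polynomial.X (T m)) k := by
    funext k
    cases k with
    | zero => exact hT0
    | succ m => exact hTsucc m
  have hh : ∀ d : ℕ,
      cf d (-(qc * PowerSeries.X ^ 2) * PowerSeries.rescale Polynomial.X (T d)) = 0 := by
    intro d
    have hrw : -(qc * PowerSeries.X ^ 2) * PowerSeries.rescale Polynomial.X (T d)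
        = -((qc * PowerSeries.rescale Polynomial.X (T d)) * PowerSeries.X ^ 2) := by ring
    rw [hrw, map_neg, neg_eq_zero, PowerSeries.coeff_mul_X_pow']
    split_ifs with h2
    · rw [qc, PowerSeries.coeff_C_mul, PowerSeries.coeff_rescale, hT d (d-2) (by omega),
        mul_zero, mul_zero]
    · rfl
  calc seriesSum T * (1 - PowerSeries.X)
      = seriesSum (fun k => T k * (1 - PowerSeries.X)) := seriesSum_mul T _ hT
    _ = seriesSum (fun k => Nat.rec (motive := fun _ => PowerSeries R) 1
          (fun m _ => -(qc * PowerSeries.X ^ 2) * PowerSeries.rescale Polynomial.X (T m)) k) := by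
        rw [hfun]
    _ = 1 + seriesSum (fun m => -(qc * PowerSeries.X ^ 2)
          * PowerSeries.rescale Polynomial.X (T m)) := seriesSum_cons _ _ hh
    _ = 1 + -(qc * PowerSeries.X ^ 2)
          * seriesSum (fun m => PowerSeries.rescale Polynomial.X (T m)) := by
        exact congrArg (1 + ·) (seriesSum_mul_left _ _ hT').symm
    _ = 1 + -(qc * PowerSeries.X ^ 2)
          * PowerSeries.rescale Polynomial.X (seriesSum T) := by
        rw [seriesSum_rescale _ _ hT]
    _ = 1 - qc * PowerSeries.X ^ 2 * PowerSeries.rescale Polynomial.X (seriesSum T) := by ring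

end QHelp

/-- `F(x)(1-x) = 1 - qx² F(qx)`, and consequently
`F(x) = ∑_{k=0}^∞ (-1)^k q^{k²} x^{2k} (x;q)_{k+1}^{-1}`, where each `(x;q)_{k+1}`
(having constant term `1`) is invertible, its inverse being `Ring.inverse (qPoch (k+1))`. -/
theorem Fgen_functional_equation_and_expansion :
    Fgen * (1 - PowerSeries.X) = 1 - qc * PowerSeries.X ^ 2 * PowerSeries.rescale Polynomial.X Fgen
      ∧ Fgen = seriesSum (fun k =>
          (-1) ^ k * qc ^ (k ^ 2) * PowerSeries.X ^ (2 * k) * Ring.inverse (qPoch (k + 1))) :=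
  ⟨QHelp.Fgen_eq, QHelp.uniq QHelp.Fgen_eq QHelp.S_eq⟩
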